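/- Let G be a finite group, g ∈ G, u a unit of ℤ⟨g⟩, h ∈ G, and 𝒩 : ⟨g⟩ = N₀ ⊴ ... ⊴ N_m = G a subnormal series. Let 𝒩^h be the conjugate series ⟨g^h⟩ = N₀^h ⊴ ... ⊴ N_m^h = G. Then c_{𝒩^h}(u^h) = c_𝒩(u). -/

import Mathlib

/-- Conjugation `a^h = h⁻¹ a h` of group-ring elements by group elements. -/
noncomputable def conjBy {G : Type*} [Group G] (h : G) (a : MonoidAlgebra ℤ G) :
    MonoidAlgebra ℤ G :=
  MonoidAlgebra.of ℤ G h⁻¹ * a * MonoidAlgebra.of ℤ G h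

/-- A subnormal series `⟨g⟩ = N₀ ⊴ N₁ ⊴ ⋯ ⊴ N_len = G`. -/
structure SubnormalSeries (G : Type*) [Group G] (g : G) where
  len : ℕ
  N : ℕ → Subgroup G
  bot_eq : N 0 = Subgroup.zpowers g
  top_eq : N len = ⊤
  le_succ : ∀ i, N i ≤ N (i + 1)
  conj_mem : ∀ i, ∀ x ∈ N (i + 1), ∀ y ∈ N i, x⁻¹ * y * x ∈ N i

/-- A choice, for each `i`, of a (right) transversal `T i` of `N i` in `N (i+1)`,
recorded as a duplicate-free list. -/
structure TransversalSystem {G : Type*} [Group G] {g : G}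
    (S : SubnormalSeries G g) where
  T : ℕ → List G
  nodup : ∀ i, (T i).Nodup
  mem : ∀ i, ∀ t ∈ T i, t ∈ S.N (i + 1)
  rep : ∀ i, ∀ y ∈ S.N (i + 1), ∃! t, t ∈ T i ∧ y * t⁻¹ ∈ S.N i

/-- The construction `c⁰(u) = u`, `cⁱ(u) = ∏_{h ∈ T i} (cⁱ⁻¹(u))^h`. -/
noncomputable def cSeq {G : Type*} [Group G] {g : G} (S : SubnormalSeries G g)
    (TS : TransversalSystem S) (u : MonoidAlgebra ℤ G) : ℕ → MonoidAlgebra ℤ G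
  | 0 => u
  | i + 1 => ((TS.T i).map fun h => conjBy h (cSeq S TS u i)).prod

section Helpers

variable {G : Type*} [Group G]

open MonoidAlgebra

lemma of_inv_mul_of (x : G) : (of ℤ G x⁻¹) * of ℤ G x = 1 := by
  rw [← map_mul, inv_mul_cancel, map_one]

lemma of_mul_of_inv (x : G) : (of ℤ G x) * of ℤ G x⁻¹ = 1 := by
  rw [← map_mul, mul_inv_cancel, map_one]

lemma conjBy_one (h : G) : conjBy h (1 : MonoidAlgebra ℤ G) = 1 := by
  unfold conjBy
  rw [mul_one, of_inv_mul_of]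

lemma conjBy_mul (h : G) (a b : MonoidAlgebra ℤ G) :
    conjBy h (a * b) = conjBy h a * conjBy h b := by
  unfold conjBy
  have : of ℤ G h * of ℤ G h⁻¹ = 1 := of_mul_of_inv h
  calc of ℤ G h⁻¹ * (a * b) * of ℤ G h
      = of ℤ G h⁻¹ * a * (of ℤ G h * of ℤ G h⁻¹) * b * of ℤ G h := by
        rw [this]; noncomm_ring
    _ = of ℤ G h⁻¹ * a * of ℤ G h * (of ℤ G h⁻¹ * b * of ℤ G h) := by
        noncomm_ring

lemma conjBy_conjBy (t h : G) (a : MonoidAlgebra ℤ G) :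
    conjBy h (conjBy t a) = conjBy (t * h) a := by
  unfold conjBy
  rw [mul_inv_rev, map_mul, map_mul]
  noncomm_ring

lemma conjBy_prod (h : G) (l : List (MonoidAlgebra ℤ G)) :
    conjBy h l.prod = (l.map (conjBy h)).prod := by
  induction l with
  | nil => simpa using conjBy_one h
  | cons a l ih => simp [conjBy_mul, ih]

lemma commute_of_support (a b : MonoidAlgebra ℤ G)
    (hb : ∀ y ∈ b.coeff.support, Commute a (of ℤ G y)) : Commute a b := by
  have hb' : b = ∑ y ∈ b.coeff.support, MonoidAlgebra.single y (b.coeff y) := by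
    conv_lhs => rw [← MonoidAlgebra.sum_coeff_single b]
    rfl
  rw [hb']
  refine Commute.sum_right _ _ _ fun y hy => ?_
  have : MonoidAlgebra.single y (b.coeff y) = (b.coeff y) • MonoidAlgebra.single y (1 : ℤ) := by
    rw [MonoidAlgebra.smul_single', mul_one]
  rw [this]
  exact (hb y hy).smul_right (b.coeff y)

lemma conjBy_eq_of_commute {x : G} {a : MonoidAlgebra ℤ G}
    (h : Commute (of ℤ G x) a) : conjBy x a = a := by
  unfold conjBy
  rw [mul_assoc, ← h.eq, ← mul_assoc, of_inv_mul_of, one_mul]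

lemma commute_of_conjBy_eq {x : G} {a : MonoidAlgebra ℤ G}
    (h : conjBy x a = a) : Commute (of ℤ G x) a := by
  unfold conjBy at h
  have := congrArg (fun z => of ℤ G x * z) h
  rw [← mul_assoc, ← mul_assoc, of_mul_of_inv, one_mul] at this
  exact this.symm

lemma support_conjBy_subset (x : G) (a : MonoidAlgebra ℤ G) :
    ∀ y ∈ (conjBy x a).coeff.support, ∃ z ∈ a.coeff.support, y = x⁻¹ * z * x := by
  classical
  intro y hy
  have h1 := MonoidAlgebra.support_coeff_mul_subset (of ℤ G x⁻¹ * a) (of ℤ G x) hy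
  rw [Finset.mem_mul] at h1
  obtain ⟨p, hp, q, hq, hpq⟩ := h1
  have h2 := MonoidAlgebra.support_coeff_mul_subset (of ℤ G x⁻¹) a hp
  rw [Finset.mem_mul] at h2
  obtain ⟨r, hr, z, hz, hrz⟩ := h2
  have hr' : r = x⁻¹ := by
    have := Finsupp.support_single_subset hr
    simpa using this
  have hq' : q = x := by
    have := Finsupp.support_single_subset hq
    simpa using this
  exact ⟨z, hz, by rw [← hpq, ← hrz, hr', hq']⟩

end Helpers

theorem cSeq_conj {G : Type*} [Group G] [Fintype G] (g h : G)
    (S : SubnormalSeries G g) (TS : TransversalSystem S)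
    (S' : SubnormalSeries G (h⁻¹ * g * h)) (TS' : TransversalSystem S')
    (hlen : S'.len = S.len)
    (hN : ∀ i, S'.N i = (S.N i).map (MulAut.conj h⁻¹).toMonoidHom)
    (hT : ∀ i, TS'.T i = (TS.T i).map fun t => h⁻¹ * t * h)
    (u : MonoidAlgebra ℤ G) (hu : IsUnit u)
    (hsupp : (u.coeff.support : Set G) ⊆ (Subgroup.zpowers g : Subgroup G)) :
    cSeq S' TS' (conjBy h u) S'.len = cSeq S TS u S.len := by
  classical
  set of' := MonoidAlgebra.of ℤ G with hof
  -- key invariant: support containment and invariance under N i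
  have key : ∀ i, ((cSeq S TS u i).coeff.support : Set G) ⊆ S.N i ∧
      ∀ x ∈ S.N i, conjBy x (cSeq S TS u i) = cSeq S TS u i := by
    intro i
    induction i with
    | zero =>
      constructor
      · show ((u.coeff.support : Set G)) ⊆ (S.N 0 : Set G)
        rw [S.bot_eq]; exact hsupp
      · intro x hx
        rw [S.bot_eq] at hx
        apply conjBy_eq_of_commute
        apply commute_of_support
        intro y hy
        have hy' : y ∈ Subgroup.zpowers g := hsupp hy
        obtain ⟨m, hm⟩ := hx
        obtain ⟨k, hk⟩ := hy'
        have : Commute x y := by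
          rw [← hm, ← hk]; exact (Commute.refl g).zpow_zpow m k
        exact this.map (MonoidAlgebra.of ℤ G)
    | succ i ih =>
      obtain ⟨ihsupp, ihinv⟩ := ih
      set c := cSeq S TS u i with hc
      -- elements of N i commute with c
      have hcomm : ∀ n ∈ S.N i, Commute (MonoidAlgebra.of ℤ G n) c := by
        intro n hn; exact commute_of_conjBy_eq (ihinv n hn)
      -- support of conjugates
      have hconj_supp : ∀ s ∈ S.N (i+1), ((conjBy s c).coeff.support : Set G) ⊆ S.N i := by
        intro s hs y hy
        obtain ⟨z, hz, hyz⟩ := support_conjBy_subset s c y hy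
        rw [hyz]
        exact S.conj_mem i s hs z (ihsupp hz)
      -- c commutes with any element supported in N i
      have hcomm' : ∀ b : MonoidAlgebra ℤ G, ((b.coeff.support : Set G) ⊆ S.N i) →
          Commute c b := by
        intro b hb
        exact commute_of_support c b fun y hy => ((hcomm y (hb hy)).symm)
      -- conjugates of c by elements of N (i+1) pairwise commute
      have hpair : ∀ s ∈ S.N (i+1), ∀ s' ∈ S.N (i+1),
          Commute (conjBy s c) (conjBy s' c) := by
        intro s hs s' hs'
        have h1 : conjBy s (c * conjBy (s' * s⁻¹) c) = conjBy s c * conjBy s' c := by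
          rw [conjBy_mul, conjBy_conjBy]
          congr 2
          group
        have h2 : conjBy s (conjBy (s' * s⁻¹) c * c) = conjBy s' c * conjBy s c := by
          rw [conjBy_mul, conjBy_conjBy]
          congr 2
          group
        have hmem : s' * s⁻¹ ∈ S.N (i+1) := mul_mem hs' (inv_mem hs)
        have hcm := hcomm' (conjBy (s' * s⁻¹) c) (hconj_supp _ hmem)
        rw [commute_iff_eq, ← h1, ← h2, hcm.eq]
      constructor
      · -- support of cSeq (i+1)
        show (((((TS.T i).map fun t => conjBy t c).prod).coeff.support : Set G)) ⊆ S.N (i+1)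
        have : ∀ l : List G, (∀ t ∈ l, t ∈ S.N (i+1)) →
            (((l.map fun t => conjBy t c).prod).coeff.support : Set G) ⊆ S.N i := by
          intro l
          induction l with
          | nil =>
            intro _ y hy
            simp only [List.map_nil, List.prod_nil, MonoidAlgebra.one_def] at hy
            have hy1 : y = 1 := by simpa using Finsupp.support_single_subset hy
            rw [hy1]; exact one_mem _
          | cons a l ihl =>
            intro hmem y hy
            simp only [List.map_cons, List.prod_cons] at hy
            have := MonoidAlgebra.support_coeff_mul_subset (conjBy a c)
              ((l.map fun t => conjBy t c).prod) hy
            rw [Finset.mem_mul] at this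
            obtain ⟨p, hp, q, hq, hpq⟩ := this
            have hp' : p ∈ (S.N i : Set G) :=
              hconj_supp a (hmem a (List.mem_cons_self (a := a) (l := l))) hp
            have hq' : q ∈ (S.N i : Set G) :=
              ihl (fun t ht => hmem t (List.mem_cons_of_mem a ht)) hq
            rw [← hpq]; exact mul_mem hp' hq'
        intro y hy
        exact S.le_succ i (this (TS.T i) (TS.mem i) hy)
      · -- invariance under N (i+1)
        intro x hx
        show conjBy x (((TS.T i).map fun t => conjBy t c).prod)
            = ((TS.T i).map fun t => conjBy t c).prod
        rw [conjBy_prod, List.map_map]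
        have heq1 : ((TS.T i).map (conjBy x ∘ fun t => conjBy t c))
            = (TS.T i).map fun t => conjBy (t * x) c := by
          apply List.map_congr_left
          intro t _
          exact conjBy_conjBy t x c
        rw [heq1]
        -- the representative function
        have hrep : ∀ t, t ∈ TS.T i → ∃ st, st ∈ TS.T i ∧ ((t * x) * st⁻¹ ∈ S.N i ∧
            ∀ y, (y ∈ TS.T i ∧ (t * x) * y⁻¹ ∈ S.N i) → y = st) := by
          intro t ht
          have htx : t * x ∈ S.N (i+1) := mul_mem (TS.mem i t ht) hx
          obtain ⟨st, ⟨hst1, hst2⟩, huniq⟩ := TS.rep i (t * x) htx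
          exact ⟨st, hst1, hst2, huniq⟩
        choose! s hs hs2 hsu using hrep
        -- conjugates agree with conjugation by representatives
        have heq2 : ((TS.T i).map fun t => conjBy (t * x) c)
            = (TS.T i).map fun t => conjBy (s t) c := by
          apply List.map_congr_left
          intro t ht
          have hdecomp : t * x = ((t * x) * (s t)⁻¹) * (s t) := by group
          rw [hdecomp, ← conjBy_conjBy, ihinv _ (hs2 t ht)]
        rw [heq2]
        -- s is injective on T i
        have hinj : ∀ t ∈ TS.T i, ∀ t' ∈ TS.T i, s t = s t' → t = t' := by
          intro t ht t' ht' hst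
          have h1 : (t * x) * (s t)⁻¹ ∈ S.N i := hs2 t ht
          have h2 : (t' * x) * (s t)⁻¹ ∈ S.N i := hst ▸ hs2 t' ht'
          have h3 : t * t'⁻¹ ∈ S.N i := by
            have := mul_mem h1 (inv_mem h2)
            have he : (t * x) * (s t)⁻¹ * ((t' * x) * (s t)⁻¹)⁻¹ = t * t'⁻¹ := by group
            rwa [he] at this
          -- uniqueness in rep for y = t
          obtain ⟨r, hr, hru⟩ := TS.rep i t (TS.mem i t ht)
          have e1 : t = r := hru t ⟨ht, by simpa using one_mem (S.N i)⟩
          have e2 : t' = r := hru t' ⟨ht', h3⟩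
          rw [e1, e2]
        -- T.map s is a permutation of T
        have hperm : ((TS.T i).map s).Perm (TS.T i) := by
          apply List.Subperm.perm_of_length_le
          · apply List.Nodup.subperm
            · exact List.Nodup.map_on hinj (TS.nodup i)
            · intro y hy
              rw [List.mem_map] at hy
              obtain ⟨t, ht, rfl⟩ := hy
              exact hs t ht
          · simp
        have hpermM : (((TS.T i).map s).map fun t => conjBy t c).Perm
            ((TS.T i).map fun t => conjBy t c) := hperm.map _
        have hpw : ((((TS.T i).map s)).map fun t => conjBy t c).Pairwise Commute := by
          apply List.pairwise_of_forall_mem_list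
          intro a ha b hb
          rw [List.mem_map] at ha hb
          obtain ⟨ta, hta, rfl⟩ := ha
          obtain ⟨tb, htb, rfl⟩ := hb
          rw [List.mem_map] at hta htb
          obtain ⟨ta', hta', rfl⟩ := hta
          obtain ⟨tb', htb', rfl⟩ := htb
          exact hpair _ (TS.mem i _ (hs ta' hta')) _ (TS.mem i _ (hs tb' htb'))
        have hfin := hpermM.prod_eq' hpw
        rw [List.map_map] at hfin
        exact hfin
  -- conjugation compatibility
  have conj_eq : ∀ i, cSeq S' TS' (conjBy h u) i = conjBy h (cSeq S TS u i) := by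
    intro i
    induction i with
    | zero => rfl
    | succ i ih =>
      show ((TS'.T i).map fun t => conjBy t (cSeq S' TS' (conjBy h u) i)).prod
          = conjBy h (((TS.T i).map fun t => conjBy t (cSeq S TS u i)).prod)
      rw [ih, hT i, List.map_map, conjBy_prod, List.map_map]
      apply congrArg
      apply List.map_congr_left
      intro t _
      show conjBy (h⁻¹ * t * h) (conjBy h (cSeq S TS u i))
          = conjBy h (conjBy t (cSeq S TS u i))
      rw [conjBy_conjBy, conjBy_conjBy]
      congr 1
      group
  rw [hlen, conj_eq]
  exact (key S.len).2 h (by rw [S.top_eq]; trivial)
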